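/- There exists a ℂ-algebra automorphism σ of the Weyl algebra Aₙ(ℂ) (the Fourier transform) such that for every i, σ sends the element of Aₙ(ℂ) given by the multiplication operator xᵢ to the element given by ∂ᵢ, and sends the element given by ∂ᵢ to the element given by −xᵢ. (Paper's Example 5.1.4.) -/

import Mathlib

open MvPolynomial

/-- The Weyl algebra `Aₙ(ℂ)`, realized as the `ℂ`-subalgebra of
`Module.End ℂ (MvPolynomial (Fin n) ℂ)` generated by the multiplication operators
`xᵢ` (multiplication by the variable `X i`) and the formal partial derivative
operators `∂ᵢ = pderiv i`. -/
noncomputable def WeylAlgebra (n : ℕ) :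
    Subalgebra ℂ (Module.End ℂ (MvPolynomial (Fin n) ℂ)) :=
  Algebra.adjoin ℂ
    ((Set.range fun i : Fin n =>
        (LinearMap.mulLeft ℂ (X i) : Module.End ℂ (MvPolynomial (Fin n) ℂ))) ∪
     (Set.range fun i : Fin n =>
        ((pderiv i).toLinearMap : Module.End ℂ (MvPolynomial (Fin n) ℂ))))

/-- The multiplication operator `xᵢ`, as an element of the Weyl algebra. -/
noncomputable def weylX (n : ℕ) (i : Fin n) : WeylAlgebra n :=
  ⟨LinearMap.mulLeft ℂ (X i), Algebra.subset_adjoin (Set.mem_union_left _ ⟨i, rfl⟩)⟩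

/-- The partial-derivative operator `∂ᵢ`, as an element of the Weyl algebra. -/
noncomputable def weylP (n : ℕ) (i : Fin n) : WeylAlgebra n :=
  ⟨(pderiv i).toLinearMap, Algebra.subset_adjoin (Set.mem_union_right _ ⟨i, rfl⟩)⟩


namespace WeylFourier
open Finset
set_option synthInstance.maxHeartbeats 1000000
set_option maxHeartbeats 1000000
variable {n : ℕ}
local notation "P" => MvPolynomial (Fin n) ℂ

/-- coefficient formula for pderiv -/
lemma coeff_pderiv (i : Fin n) (f : P) (m : Fin n →₀ ℕ) :
    coeff m (pderiv i f) = ((m i : ℂ) + 1) * coeff (m + Finsupp.single i 1) f := by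
  induction f using MvPolynomial.induction_on' with
  | add p q hp hq => simp [hp, hq, mul_add]
  | monomial s a =>
    rw [pderiv_monomial]
    rcases Nat.eq_zero_or_pos (s i) with h | h
    · have hne : s ≠ m + Finsupp.single i 1 := by
        intro he
        apply absurd h
        rw [he]
        simp [Finsupp.add_apply]
      rw [coeff_monomial, coeff_monomial, if_neg hne, h]
      simp
    · have hle : Finsupp.single i 1 ≤ s := by
        rw [Finsupp.single_le_iff]; exact h
      have key : s - Finsupp.single i 1 = m ↔ s = m + Finsupp.single i 1 :=
        tsub_eq_iff_eq_add_of_le hle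
      rw [coeff_monomial, coeff_monomial]
      by_cases hc : s - Finsupp.single i 1 = m
      · rw [if_pos hc, if_pos (key.mp hc)]
        have hm : m i + 1 = s i := by
          rw [← hc]
          rw [Finsupp.tsub_apply, Finsupp.single_apply, if_pos rfl]
          exact Nat.succ_pred_eq_of_pos h
        rw [← hm]
        push_cast
        ring
      · rw [if_neg hc, if_neg (fun he => hc (key.mpr he))]
        simp

/-- partial derivatives commute -/
lemma pderiv_pderiv_comm (i j : Fin n) (f : P) :
    pderiv i (pderiv j f) = pderiv j (pderiv i f) := by
  apply MvPolynomial.ext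
  intro m
  simp only [coeff_pderiv]
  rw [add_right_comm m (Finsupp.single j 1) (Finsupp.single i 1)]
  rcases eq_or_ne i j with rfl | hij
  · ring_nf
  · have h1 : ((m + Finsupp.single j 1 : Fin n →₀ ℕ)) i = m i := by
      rw [Finsupp.add_apply, Finsupp.single_apply, if_neg (Ne.symm hij), add_zero]
    have h2 : ((m + Finsupp.single i 1 : Fin n →₀ ℕ)) j = m j := by
      rw [Finsupp.add_apply, Finsupp.single_apply, if_neg hij, add_zero]
    rw [h1, h2]
    ring

/-- the factorial weight -/
noncomputable def wt (α : Fin n →₀ ℕ) : ℂ := ∏ j : Fin n, (Nat.factorial (α j) : ℂ)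

lemma wt_ne_zero (α : Fin n →₀ ℕ) : wt α ≠ 0 := by
  apply Finset.prod_ne_zero_iff.mpr
  intro j _
  exact_mod_cast Nat.factorial_ne_zero (α j)

lemma wt_add_single (α : Fin n →₀ ℕ) (i : Fin n) :
    wt (α + Finsupp.single i 1) = ((α i : ℂ) + 1) * wt α := by
  unfold wt
  rw [← Finset.mul_prod_erase univ _ (mem_univ i), ← Finset.mul_prod_erase univ
    (fun j => (Nat.factorial (α j) : ℂ)) (mem_univ i)]
  have h1 : ((α + Finsupp.single i 1 : Fin n →₀ ℕ)) i = α i + 1 := by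
    rw [Finsupp.add_apply, Finsupp.single_apply, if_pos rfl]
  have h2 : ∀ j ∈ univ.erase i, (Nat.factorial ((α + Finsupp.single i 1 : Fin n →₀ ℕ) j) : ℂ) =
      (Nat.factorial (α j) : ℂ) := by
    intro j hj
    have hja : ((α + Finsupp.single i 1 : Fin n →₀ ℕ)) j = α j := by
      rw [Finsupp.add_apply, Finsupp.single_apply, if_neg (Finset.mem_erase.mp hj).1.symm,
        add_zero]
    rw [hja]
  rw [Finset.prod_congr rfl h2, h1, Nat.factorial_succ]
  push_cast
  ring

/-- the Fock pairing -/
noncomputable def Bf (f g : P) : ℂ := ∑ α ∈ f.support, wt α * coeff α f * coeff α g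

lemma Bf_eq_sum {f : P} (g : P) {s : Finset (Fin n →₀ ℕ)} (hs : f.support ⊆ s) :
    Bf f g = ∑ α ∈ s, wt α * coeff α f * coeff α g := by
  refine Finset.sum_subset hs (fun α _ hα => ?_)
  rw [notMem_support_iff.mp hα]
  ring

lemma Bf_comm (f g : P) : Bf f g = Bf g f := by
  classical
  rw [Bf_eq_sum g (Finset.subset_union_left (s₂ := g.support)),
    Bf_eq_sum f (Finset.subset_union_right (s₁ := f.support))]
  exact Finset.sum_congr rfl (fun α _ => by ring)

lemma Bf_add_left (f f' g : P) : Bf (f + f') g = Bf f g + Bf f' g := by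
  classical
  rw [Bf_eq_sum g (MvPolynomial.support_add (p := f) (q := f')),
    Bf_eq_sum g (Finset.subset_union_left (s₂ := f'.support)),
    Bf_eq_sum g (Finset.subset_union_right (s₁ := f.support)), ← Finset.sum_add_distrib]
  exact Finset.sum_congr rfl (fun α _ => by rw [coeff_add]; ring)

lemma Bf_add_right (f g g' : P) : Bf f (g + g') = Bf f g + Bf f g' := by
  unfold Bf
  rw [← Finset.sum_add_distrib]
  exact Finset.sum_congr rfl (fun α _ => by rw [coeff_add]; ring)

lemma Bf_smul_left (c : ℂ) (f g : P) : Bf (c • f) g = c * Bf f g := by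
  rw [Bf_eq_sum g (MvPolynomial.support_smul (a := c) (f := f))]
  unfold Bf
  rw [Finset.mul_sum]
  exact Finset.sum_congr rfl (fun α _ => by rw [coeff_smul, smul_eq_mul]; ring)

lemma Bf_smul_right (c : ℂ) (f g : P) : Bf f (c • g) = c * Bf f g := by
  unfold Bf
  rw [Finset.mul_sum]
  exact Finset.sum_congr rfl (fun α _ => by rw [coeff_smul, smul_eq_mul]; ring)

lemma Bf_sub_left (f f' g : P) : Bf (f - f') g = Bf f g - Bf f' g := by
  have h := Bf_add_left (f - f') f' g
  rw [sub_add_cancel] at h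
  linear_combination -h

lemma Bf_sub_right (f g g' : P) : Bf f (g - g') = Bf f g - Bf f g' := by
  have h := Bf_add_right f (g - g') g'
  rw [sub_add_cancel] at h
  linear_combination -h

lemma Bf_monomial_left (α : Fin n →₀ ℕ) (h : P) :
    Bf (monomial α 1) h = wt α * coeff α h := by
  unfold Bf
  rw [support_monomial, if_neg one_ne_zero, Finset.sum_singleton, coeff_monomial, if_pos rfl]
  ring

lemma Bf_nondeg {h : P} (hall : ∀ f, Bf f h = 0) : h = 0 := by
  apply MvPolynomial.ext
  intro α
  have := hall (monomial α 1)
  rw [Bf_monomial_left] at this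
  rcases mul_eq_zero.mp this with h1 | h1
  · exact absurd h1 (wt_ne_zero α)
  · simp [h1]

/-- The key adjunction: multiplication by `X i` is adjoint to `pderiv i`. -/
lemma Bf_X_mul (i : Fin n) (f g : P) : Bf (X i * f) g = Bf f (pderiv i g) := by
  unfold Bf
  rw [support_X_mul, Finset.sum_map]
  refine Finset.sum_congr rfl (fun α _ => ?_)
  have he : addLeftEmbedding (Finsupp.single i 1) α = Finsupp.single i 1 + α := rfl
  rw [he, coeff_X_mul, coeff_pderiv, add_comm (Finsupp.single i 1) α,
    wt_add_single]
  ring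

lemma Bf_pderiv (i : Fin n) (f g : P) : Bf (pderiv i f) g = Bf f (X i * g) := by
  rw [Bf_comm, ← Bf_X_mul, Bf_comm]

noncomputable def Mop (i : Fin n) : Module.End ℂ P := LinearMap.mulLeft ℂ (X i)
noncomputable def Dop (i : Fin n) : Module.End ℂ P := (pderiv i).toLinearMap

@[simp] lemma Mop_apply (i : Fin n) (f : P) : Mop i f = X i * f := rfl
@[simp] lemma Dop_apply (i : Fin n) (f : P) : Dop i f = pderiv i f := rfl

lemma pderiv_smul' (i : Fin n) (c : ℂ) (f : P) :
    pderiv i (c • f) = c • pderiv i f := (Dop i).map_smul c f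

noncomputable def Dsq : Module.End ℂ P := ∑ i : Fin n, (Dop i * Dop i)

lemma Dsq_apply (f : P) : Dsq (n := n) f = ∑ i : Fin n, pderiv i (pderiv i f) := by
  simp [Dsq, LinearMap.sum_apply, Module.End.mul_apply]

lemma Dop_Dsq_comm (i : Fin n) : Commute (Dop i) (Dsq (n := n)) := by
  apply LinearMap.ext; intro f
  simp only [Module.End.mul_apply, Dsq_apply, Dop_apply, map_sum]
  exact Finset.sum_congr rfl fun j _ => by rw [pderiv_pderiv_comm i j, pderiv_pderiv_comm i j]

lemma Dop_Dsq_pow (i : Fin n) (k : ℕ) (f : P) :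
    pderiv i ((Dsq (n := n) ^ k) f) = (Dsq ^ k) (pderiv i f) := by
  have h := (Dop_Dsq_comm (n := n) i).pow_right k
  have := congrFun (congrArg DFunLike.coe h) f
  simpa [Module.End.mul_apply] using this

/-- total degree drops under pderiv -/
lemma td_pderiv (i : Fin n) (f : P) (h : pderiv i f ≠ 0) :
    (pderiv i f).totalDegree < f.totalDegree := by
  have key : ∀ α ∈ (pderiv i f).support, (α.sum fun _ e => e) + 1 ≤ f.totalDegree := by
    intro α hα
    rw [mem_support_iff, coeff_pderiv] at hα
    have h2 : coeff (α + Finsupp.single i 1) f ≠ 0 := by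
      intro h0; rw [h0, mul_zero] at hα; exact hα rfl
    have hle := MvPolynomial.le_totalDegree (mem_support_iff.mpr h2)
    have hsum : ((α + Finsupp.single i 1 : Fin n →₀ ℕ).sum fun _ e => e)
        = (α.sum fun _ e => e) + 1 := by
      rw [Finsupp.sum_add_index' (fun _ => rfl) (fun _ _ _ => rfl),
        Finsupp.sum_single_index rfl]
    omega
  have hpos : 0 < f.totalDegree := by
    obtain ⟨α, hα⟩ := MvPolynomial.ne_zero_iff.mp h
    have := key α (mem_support_iff.mpr hα)
    omega
  rw [MvPolynomial.totalDegree, Finset.sup_lt_iff (by exact_mod_cast hpos)]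
  intro α hα
  have := key α hα
  omega

lemma td_pderiv_le (i : Fin n) (f : P) : (pderiv i f).totalDegree ≤ f.totalDegree := by
  by_cases h : pderiv i f = 0
  · simp [h]
  · exact (td_pderiv i f h).le

lemma td_Dsq_le (f : P) : (Dsq (n := n) f).totalDegree ≤ f.totalDegree := by
  rw [Dsq_apply]
  exact totalDegree_finsetSum_le fun i _ => (td_pderiv_le i _).trans (td_pderiv_le i f)

lemma td_Dsq (f : P) (h : Dsq (n := n) f ≠ 0) :
    (Dsq (n := n) f).totalDegree < f.totalDegree := by
  have hex : ∃ i : Fin n, pderiv i (pderiv i f) ≠ 0 := by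
    by_contra hno
    push_neg at hno
    exact h (by rw [Dsq_apply]; exact Finset.sum_eq_zero fun i _ => hno i)
  obtain ⟨i, hi⟩ := hex
  have h1 : pderiv i f ≠ 0 := fun h0 => hi (by rw [h0]; simp)
  have hpos : 0 < f.totalDegree := lt_of_le_of_lt (Nat.zero_le _) (td_pderiv i f h1)
  have hb : (Dsq (n := n) f).totalDegree ≤ f.totalDegree - 1 := by
    rw [Dsq_apply]
    apply totalDegree_finsetSum_le
    intro j _
    by_cases hj : pderiv j (pderiv j f) = 0
    · simp [hj]
    · have hj1 : pderiv j f ≠ 0 := fun h0 => hj (by rw [h0]; simp)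
      have := td_pderiv j (pderiv j f) hj
      have := td_pderiv j f hj1
      omega
  omega

lemma Dsq_pow_zero (k : ℕ) (f : P) (h : f.totalDegree < k) : (Dsq (n := n) ^ k) f = 0 := by
  induction k generalizing f with
  | zero => omega
  | succ k ih =>
    rw [pow_succ, Module.End.mul_apply]
    by_cases h0 : Dsq (n := n) f = 0
    · rw [h0, map_zero]
    · have h1 := td_Dsq f h0
      exact ih (Dsq f) (by omega)

/-- exp(t·Dsq) as a function -/
noncomputable def Efun (t : ℂ) (f : P) : P :=
  ∑ k ∈ Finset.range (f.totalDegree + 1), (t ^ k / (Nat.factorial k : ℂ)) • (Dsq ^ k) f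

lemma Efun_eq (t : ℂ) (f : P) {m : ℕ} (hm : f.totalDegree < m) :
    Efun t f = ∑ k ∈ Finset.range m, (t ^ k / (Nat.factorial k : ℂ)) • (Dsq ^ k) f := by
  refine Finset.sum_subset (Finset.range_subset_range.mpr (by omega)) (fun k _ hk => ?_)
  rw [Finset.mem_range, not_lt] at hk
  rw [Dsq_pow_zero k f (by omega), smul_zero]

noncomputable def Emap (t : ℂ) : Module.End ℂ P where
  toFun := Efun t
  map_add' f g := by
    set m := max (max f.totalDegree g.totalDegree) (f + g).totalDegree + 1 with hm
    have hf : f.totalDegree < m := Nat.lt_succ_of_le ((le_max_left _ _).trans (le_max_left _ _))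
    have hg : g.totalDegree < m := Nat.lt_succ_of_le ((le_max_right _ _).trans (le_max_left _ _))
    have hfg : (f + g).totalDegree < m := Nat.lt_succ_of_le (le_max_right _ _)
    rw [Efun_eq t f hf, Efun_eq t g hg, Efun_eq t (f + g) hfg, ← Finset.sum_add_distrib]
    exact Finset.sum_congr rfl fun k _ => by rw [map_add, smul_add]
  map_smul' c f := by
    simp only [RingHom.id_apply]
    rw [Efun_eq t (c • f) (m := f.totalDegree + 1)
      (Nat.lt_succ_of_le (totalDegree_smul_le c f)), Efun, Finset.smul_sum]
    exact Finset.sum_congr rfl fun k _ => by rw [LinearMap.map_smul, smul_comm]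

lemma Emap_apply (t : ℂ) (f : P) : Emap t f = Efun t f := rfl

lemma Emap_D_comm (t : ℂ) (i : Fin n) (f : P) :
    Emap t (pderiv i f) = pderiv i (Emap (n := n) t f) := by
  rw [Emap_apply, Emap_apply, Efun_eq t (pderiv i f) (m := f.totalDegree + 1)
    (Nat.lt_succ_of_le (td_pderiv_le i f)), Efun, ← Dop_apply i, map_sum]
  exact Finset.sum_congr rfl fun k _ => by
    rw [pderiv_smul', Dop_Dsq_pow, Dop_apply]

lemma Dsq_X_comm (i : Fin n) (f : P) :
    Dsq (n := n) (X i * f) = X i * Dsq f + (2 : ℂ) • pderiv i f := by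
  rw [Dsq_apply]
  have hterm : ∀ j : Fin n, pderiv j (pderiv j (X i * f)) =
      X i * pderiv j (pderiv j f) + (if j = i then (2:ℂ) • pderiv i f else 0) := by
    intro j
    rcases eq_or_ne j i with rfl | hji
    · rw [if_pos rfl]
      have e1 : ∀ g : P, pderiv j (X j * g) = g + X j * pderiv j g := by
        intro g; rw [pderiv_mul, pderiv_X_self, one_mul]
      rw [e1 f, map_add, e1 (pderiv j f), two_smul]
      ring
    · rw [if_neg hji]
      have e2 : ∀ g : P, pderiv j (X i * g) = X i * pderiv j g := by
        intro g; rw [pderiv_mul, pderiv_X_of_ne (Ne.symm hji), zero_mul, zero_add]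
      rw [e2 f, e2 (pderiv j f), add_zero]
  rw [Finset.sum_congr rfl fun j _ => hterm j, Finset.sum_add_distrib,
    Finset.sum_ite_eq' univ i (fun _ => (2:ℂ) • pderiv i f), if_pos (mem_univ i),
    ← Finset.mul_sum, ← Dsq_apply]

lemma Dsq_pow_X_comm (i : Fin n) (k : ℕ) (f : P) :
    (Dsq (n := n) ^ k) (X i * f) =
      X i * (Dsq ^ k) f + ((2 * k : ℂ)) • pderiv i ((Dsq ^ (k - 1)) f) := by
  induction k generalizing f with
  | zero => simp
  | succ k ih =>
    have hs : ∀ g : P, (Dsq (n := n) ^ (k+1)) g = (Dsq ^ k) (Dsq g) := by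
      intro g; rw [pow_succ, Module.End.mul_apply]
    rw [hs, Dsq_X_comm, map_add, LinearMap.map_smul, ih (Dsq f), ← hs, Nat.add_sub_cancel]
    have h2 : (Dsq (n := n) ^ k) (pderiv i f) = pderiv i ((Dsq ^ k) f) :=
      (Dop_Dsq_pow i k f).symm
    rw [h2]
    rcases Nat.eq_zero_or_pos k with rfl | hk
    · simp only [pow_zero, Module.End.one_apply, Nat.cast_zero, mul_zero, zero_smul, add_zero,
        Nat.zero_sub, Nat.cast_one, mul_one]
      module
    · have h1 : (Dsq (n := n) ^ (k - 1)) (Dsq f) = (Dsq ^ k) f := by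
        rw [← Module.End.mul_apply, ← pow_succ]
        congr 2
        omega
      rw [h1]
      push_cast
      match_scalars <;> ring

lemma Emap_X_comm (t : ℂ) (i : Fin n) (f : P) :
    Emap t (X i * f) = X i * Emap t f + (2 * t) • pderiv i (Emap (n := n) t f) := by
  have hX : (X i : P).totalDegree = 1 := totalDegree_X i
  have hmul := totalDegree_mul (X i) f
  have hb : (X i * f).totalDegree < f.totalDegree + 1 + 1 := by omega
  rw [Emap_apply, Efun_eq t _ hb]
  have expand : ∀ k ∈ Finset.range (f.totalDegree + 1 + 1),
      (t ^ k / (Nat.factorial k : ℂ)) • (Dsq (n := n) ^ k) (X i * f) =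
      (t ^ k / (Nat.factorial k : ℂ)) • (X i * (Dsq ^ k) f)
        + (t ^ k / (Nat.factorial k : ℂ) * (2 * k)) • pderiv i ((Dsq ^ (k - 1)) f) := by
    intro k _
    rw [Dsq_pow_X_comm, smul_add, smul_smul]
  rw [Finset.sum_congr rfl expand, Finset.sum_add_distrib]
  congr 1
  · rw [Emap_apply, Efun, Finset.mul_sum]
    rw [show f.totalDegree + 1 + 1 = (f.totalDegree + 1) + 1 from rfl,
      Finset.sum_range_succ, Dsq_pow_zero _ f (by omega), mul_zero, smul_zero, add_zero]
    exact Finset.sum_congr rfl fun k _ => by rw [mul_smul_comm]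
  · rw [Finset.sum_range_succ' _ (f.totalDegree + 1)]
    simp only [Nat.cast_zero, mul_zero, zero_smul, pow_zero, Nat.factorial_zero, Nat.cast_one,
      add_zero, Nat.add_sub_cancel]
    rw [Emap_apply, Efun, ← Dop_apply i, map_sum, Finset.smul_sum]
    refine Finset.sum_congr rfl fun k _ => ?_
    rw [LinearMap.map_smul, smul_smul]
    simp only [Dop_apply]
    congr 1
    have hk1 : (Nat.factorial k : ℂ) ≠ 0 := by exact_mod_cast Nat.factorial_ne_zero k
    have hk2 : ((k : ℂ) + 1) ≠ 0 := by
      have : ((k + 1 : ℕ) : ℂ) ≠ 0 := Nat.cast_ne_zero.mpr (Nat.succ_ne_zero k)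
      push_cast at this
      exact this
    rw [Nat.factorial_succ, pow_succ]
    push_cast
    field_simp

lemma Emap_def (t : ℂ) (f : P) :
    Emap t f = ∑ k ∈ Finset.range (f.totalDegree + 1),
      (t ^ k / (Nat.factorial k : ℂ)) • (Dsq ^ k) f := rfl

lemma Dsq_pow_td_le (k : ℕ) (f : P) :
    ((Dsq (n := n) ^ k) f).totalDegree ≤ f.totalDegree := by
  induction k generalizing f with
  | zero => simp
  | succ k ih =>
    rw [pow_succ, Module.End.mul_apply]
    refine (ih (Dsq f)).trans ?_
    by_cases h : Dsq (n := n) f = 0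
    · simp [h]
    · exact (td_Dsq f h).le

/-- remainder term -/
noncomputable def Rt (t : ℂ) (f : P) : P :=
  ∑ k ∈ Finset.range f.totalDegree,
    (t ^ (k+1) / (Nat.factorial (k+1) : ℂ)) • (Dsq ^ (k+1)) f

lemma Emap_decomp (t : ℂ) (f : P) : Emap t f = Rt t f + f := by
  rw [Emap_def, Finset.sum_range_succ' _ f.totalDegree]
  simp only [pow_zero, Nat.factorial_zero, Nat.cast_one, div_one, one_smul,
    Module.End.one_apply]
  rfl

lemma Rt_zero (t : ℂ) (f : P) (h : Dsq (n := n) f = 0) : Rt t f = 0 := by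
  refine Finset.sum_eq_zero fun k _ => ?_
  rw [pow_succ (Dsq (n := n)) k, Module.End.mul_apply, h, map_zero, smul_zero]

lemma td_Rt (t : ℂ) (f : P) (h : Dsq (n := n) f ≠ 0) :
    (Rt t f).totalDegree < f.totalDegree := by
  have hlt := td_Dsq f h
  refine lt_of_le_of_lt (totalDegree_finsetSum_le fun k _ => ?_) hlt
  refine (totalDegree_smul_le _ _).trans ?_
  rw [pow_succ (Dsq (n := n)) k, Module.End.mul_apply]
  exact Dsq_pow_td_le k (Dsq f)

lemma Emap_injective (t : ℂ) : Function.Injective (Emap (n := n) t) := by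
  have h0 : ∀ f : P, Emap t f = 0 → f = 0 := by
    intro f hf
    by_cases h : Dsq (n := n) f = 0
    · rw [Emap_decomp, Rt_zero t f h, zero_add] at hf
      exact hf
    · exfalso
      rw [Emap_decomp] at hf
      have heq : f = -Rt t f := by linear_combination hf
      have htd := td_Rt t f h
      have h2 : f.totalDegree = (-Rt t f).totalDegree := congrArg totalDegree heq
      rw [totalDegree_neg] at h2
      omega
  intro f g hfg
  have : Emap t (f - g) = 0 := by rw [map_sub, hfg, sub_self]
  have := h0 _ this
  linear_combination this
lemma Emap_surjective (t : ℂ) : Function.Surjective (Emap (n := n) t) := by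
  have key : ∀ (d : ℕ) (g : P), g.totalDegree < d → ∃ f, Emap t f = g := by
    intro d
    induction d with
    | zero => exact fun g hg => absurd hg (Nat.not_lt_zero _)
    | succ d ih =>
      intro g hg
      by_cases h : Dsq (n := n) g = 0
      · exact ⟨g, by rw [Emap_decomp, Rt_zero t g h, zero_add]⟩
      · have h1 : (Rt t g).totalDegree < d := by
          have := td_Rt t g h
          omega
        obtain ⟨f', hf'⟩ := ih (Rt t g) h1
        refine ⟨g - f', ?_⟩
        rw [map_sub, hf', Emap_decomp]
        ring
  exact fun g => key (g.totalDegree + 1) g (Nat.lt_succ_self _)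

/-- E as a linear equivalence -/
noncomputable def Eeq : P ≃ₗ[ℂ] P :=
  LinearEquiv.ofBijective (Emap (2⁻¹ : ℂ)) ⟨Emap_injective _, Emap_surjective _⟩

lemma Eeq_apply (f : P) : Eeq (n := n) f = Emap (2⁻¹ : ℂ) f := rfl

noncomputable def Fm : Module.End ℂ P := (Eeq (n := n).symm : P ≃ₗ[ℂ] P)

lemma E_F (f : P) : Emap (2⁻¹ : ℂ) (Fm (n := n) f) = f := Eeq.apply_symm_apply f
lemma F_E (f : P) : Fm (n := n) (Emap (2⁻¹ : ℂ) f) = f := Eeq.symm_apply_apply f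

lemma Em_X (i : Fin n) (f : P) :
    Emap (2⁻¹ : ℂ) (X i * f) = X i * Emap (2⁻¹ : ℂ) f
      + pderiv i (Emap (n := n) (2⁻¹ : ℂ) f) := by
  rw [Emap_X_comm]
  norm_num

lemma Fm_D (i : Fin n) (f : P) : Fm (n := n) (pderiv i f) = pderiv i (Fm f) := by
  apply Emap_injective (2⁻¹ : ℂ)
  rw [E_F, Emap_D_comm, E_F]

lemma Fm_X (i : Fin n) (f : P) :
    Fm (n := n) (X i * f) = X i * Fm f - pderiv i (Fm f) := by
  apply Emap_injective (2⁻¹ : ℂ)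
  rw [E_F, map_sub, Em_X, Emap_D_comm, E_F]
  ring

/-- twisted pairings -/
noncomputable def B2 (f g : P) : ℂ := Bf (Emap (2⁻¹ : ℂ) f) g
noncomputable def B1 (f g : P) : ℂ := Bf (Fm (n := n) f) (Fm g)

lemma B2_add_left (f f' g : P) : B2 (f + f') g = B2 f g + B2 f' g := by
  unfold B2; rw [map_add, Bf_add_left]
lemma B2_add_right (f g g' : P) : B2 f (g + g') = B2 f g + B2 f g' := by
  unfold B2; rw [Bf_add_right]
lemma B2_smul_left (c : ℂ) (f g : P) : B2 (c • f) g = c * B2 f g := by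
  unfold B2; rw [LinearMap.map_smul, Bf_smul_left]
lemma B2_smul_right (c : ℂ) (f g : P) : B2 f (c • g) = c * B2 f g := by
  unfold B2; rw [Bf_smul_right]
lemma B2_sub_right (f g g' : P) : B2 f (g - g') = B2 f g - B2 f g' := by
  unfold B2; rw [Bf_sub_right]

lemma B1_add_left (f f' g : P) : B1 (f + f') g = B1 f g + B1 f' g := by
  unfold B1; rw [map_add, Bf_add_left]
lemma B1_add_right (f g g' : P) : B1 f (g + g') = B1 f g + B1 f g' := by
  unfold B1; rw [map_add, Bf_add_right]
lemma B1_smul_left (c : ℂ) (f g : P) : B1 (c • f) g = c * B1 f g := by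
  unfold B1; rw [LinearMap.map_smul, Bf_smul_left]
lemma B1_smul_right (c : ℂ) (f g : P) : B1 f (c • g) = c * B1 f g := by
  unfold B1; rw [LinearMap.map_smul, Bf_smul_right]
lemma B1_sub_right (f g g' : P) : B1 f (g - g') = B1 f g - B1 f g' := by
  unfold B1; rw [map_sub, Bf_sub_right]

lemma B2_nondeg {h : P} (hall : ∀ f, B2 f h = 0) : h = 0 := by
  apply Bf_nondeg
  intro f
  have := hall (Fm f)
  rwa [B2, E_F] at this

lemma B1_nondeg {h : P} (hall : ∀ f, B1 f h = 0) : h = 0 := by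
  have hF : Fm (n := n) h = 0 := by
    apply Bf_nondeg
    intro f
    have := hall (Emap (2⁻¹ : ℂ) f)
    rwa [B1, F_E] at this
  have := congrArg (Emap (n := n) (2⁻¹ : ℂ)) hF
  rwa [E_F, map_zero] at this

/-- adjunction identities -/
lemma B2_X (i : Fin n) (f g : P) : B2 (X i * f) g = B2 f (X i * g + pderiv i g) := by
  unfold B2
  rw [Em_X, Bf_add_left, Bf_X_mul, Bf_pderiv, ← Bf_add_right, add_comm (X i * g)]

lemma B2_D (i : Fin n) (f g : P) : B2 (pderiv i f) g = B2 f (X i * g) := by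
  unfold B2
  rw [Emap_D_comm, Bf_pderiv]

lemma B1_X (i : Fin n) (f g : P) : B1 (X i * f) g = B1 f (-(X i * g)) := by
  unfold B1
  rw [Fm_X, Bf_sub_left, Bf_X_mul, Bf_pderiv, map_neg, Fm_X]
  rw [show -(X i * Fm (n := n) g - pderiv i (Fm g)) = pderiv i (Fm g) - X i * Fm g by ring,
    Bf_sub_right]

lemma B1_D (i : Fin n) (f g : P) : B1 (pderiv i f) g = B1 f (X i * g + pderiv i g) := by
  unfold B1
  rw [Fm_D, Bf_pderiv, map_add, Fm_X, Fm_D]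
  rw [show X i * Fm (n := n) g - pderiv i (Fm g) + pderiv i (Fm g) = X i * Fm g by ring]

lemma B2_neg_left (f g : P) : B2 (-f) g = -B2 f g := by
  rw [show (-f : P) = (-1 : ℂ) • f from (neg_one_smul ℂ f).symm, B2_smul_left]; ring
lemma B2_neg_right (f g : P) : B2 f (-g) = -B2 f g := by
  rw [show (-g : P) = (-1 : ℂ) • g from (neg_one_smul ℂ g).symm, B2_smul_right]; ring
lemma B1_neg_left (f g : P) : B1 (-f) g = -B1 f g := by
  rw [show (-f : P) = (-1 : ℂ) • f from (neg_one_smul ℂ f).symm, B1_smul_left]; ring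
lemma B1_neg_right (f g : P) : B1 f (-g) = -B1 f g := by
  rw [show (-g : P) = (-1 : ℂ) • g from (neg_one_smul ℂ g).symm, B1_smul_right]; ring
def Adj2 (a c : Module.End ℂ P) : Prop := ∀ f g, B2 (a f) g = B2 f (c g)
def Adj1 (c b : Module.End ℂ P) : Prop := ∀ f g, B1 (c f) g = B1 f (b g)
/-- `b` is the Fourier transform of `a` -/
def IsFT (a b : Module.End ℂ P) : Prop := ∃ c, Adj2 a c ∧ Adj1 c b

lemma Adj2_unique {a c c' : Module.End ℂ P} (h : Adj2 a c) (h' : Adj2 a c') : c = c' := by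
  apply LinearMap.ext
  intro g
  have : ∀ f, B2 f (c g - c' g) = 0 := by
    intro f
    rw [B2_sub_right, ← h f g, ← h' f g, sub_self]
  have := B2_nondeg this
  linear_combination this

lemma Adj1_unique {c b b' : Module.End ℂ P} (h : Adj1 c b) (h' : Adj1 c b') : b = b' := by
  apply LinearMap.ext
  intro g
  have : ∀ f, B1 f (b g - b' g) = 0 := by
    intro f
    rw [B1_sub_right, ← h f g, ← h' f g, sub_self]
  have := B1_nondeg this
  linear_combination this

lemma IsFT_unique {a b b' : Module.End ℂ P} (h : IsFT a b) (h' : IsFT a b') : b = b' := by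
  obtain ⟨c, h2, h1⟩ := h
  obtain ⟨c', h2', h1'⟩ := h'
  rw [Adj2_unique h2 h2'] at h1
  exact Adj1_unique h1 h1'

lemma IsFT_one : IsFT (1 : Module.End ℂ P) 1 :=
  ⟨1, fun f g => rfl, fun f g => rfl⟩

lemma IsFT_algebraMap (r : ℂ) :
    IsFT (algebraMap ℂ (Module.End ℂ P) r) (algebraMap ℂ (Module.End ℂ P) r) := by
  refine ⟨algebraMap ℂ (Module.End ℂ P) r, fun f g => ?_, fun f g => ?_⟩
  · rw [Module.algebraMap_end_apply, Module.algebraMap_end_apply, B2_smul_left, B2_smul_right]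
  · rw [Module.algebraMap_end_apply, Module.algebraMap_end_apply, B1_smul_left, B1_smul_right]

lemma IsFT_add {a a' b b' : Module.End ℂ P} (h : IsFT a b) (h' : IsFT a' b') :
    IsFT (a + a') (b + b') := by
  obtain ⟨c, h2, h1⟩ := h
  obtain ⟨c', h2', h1'⟩ := h'
  refine ⟨c + c', fun f g => ?_, fun f g => ?_⟩
  · rw [LinearMap.add_apply, LinearMap.add_apply, B2_add_left, B2_add_right, h2, h2']
  · rw [LinearMap.add_apply, LinearMap.add_apply, B1_add_left, B1_add_right, h1, h1']

lemma IsFT_mul {a a' b b' : Module.End ℂ P} (h : IsFT a b) (h' : IsFT a' b') :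
    IsFT (a * a') (b * b') := by
  obtain ⟨c, h2, h1⟩ := h
  obtain ⟨c', h2', h1'⟩ := h'
  refine ⟨c' * c, fun f g => ?_, fun f g => ?_⟩
  · rw [Module.End.mul_apply, Module.End.mul_apply, h2, h2']
  · rw [Module.End.mul_apply, Module.End.mul_apply, h1', h1]

lemma IsFT_X (i : Fin n) : IsFT (Mop i) (Dop i) := by
  refine ⟨Mop i + Dop i, fun f g => ?_, fun f g => ?_⟩
  · rw [Mop_apply, LinearMap.add_apply, Mop_apply, Dop_apply, B2_X]
  · rw [LinearMap.add_apply, Mop_apply, Dop_apply, B1_add_left, B1_X, B1_D, ← B1_add_right,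
      Dop_apply]
    congr 1
    ring

lemma IsFT_D (i : Fin n) : IsFT (Dop i) (-(Mop i)) := by
  refine ⟨Mop i, fun f g => ?_, fun f g => ?_⟩
  · rw [Dop_apply, Mop_apply, B2_D]
  · rw [Mop_apply, LinearMap.neg_apply, Mop_apply, B1_X]

lemma IsFT_neg {a b : Module.End ℂ P} (h : IsFT a b) : IsFT (-a) (-b) := by
  obtain ⟨c, h2, h1⟩ := h
  refine ⟨-c, fun f g => ?_, fun f g => ?_⟩
  · rw [LinearMap.neg_apply, LinearMap.neg_apply, B2_neg_left, B2_neg_right, h2]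
  · rw [LinearMap.neg_apply, LinearMap.neg_apply, B1_neg_left, B1_neg_right, h1]

lemma IsFT_negD (i : Fin n) : IsFT (-(Dop i)) (Mop i) := by
  have h := IsFT_neg (IsFT_D i)
  rwa [neg_neg] at h

lemma Mop_mem (i : Fin n) : Mop i ∈ WeylAlgebra n :=
  Algebra.subset_adjoin (Set.mem_union_left _ ⟨i, rfl⟩)
lemma Dop_mem (i : Fin n) : Dop i ∈ WeylAlgebra n :=
  Algebra.subset_adjoin (Set.mem_union_right _ ⟨i, rfl⟩)

/-- main existence lemma -/
lemma exists_FT : ∀ a ∈ WeylAlgebra n, ∃ b ∈ WeylAlgebra n, IsFT a b := by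
  intro a ha
  induction ha using Algebra.adjoin_induction with
  | mem x hx =>
    rcases hx with ⟨i, rfl⟩ | ⟨i, rfl⟩
    · exact ⟨Dop i, Dop_mem i, IsFT_X i⟩
    · exact ⟨-(Mop i), neg_mem (Mop_mem i), IsFT_D i⟩
  | algebraMap r =>
    exact ⟨algebraMap ℂ _ r, Subalgebra.algebraMap_mem _ r, IsFT_algebraMap r⟩
  | add x y hx hy ihx ihy =>
    obtain ⟨b, hb, hft⟩ := ihx
    obtain ⟨b', hb', hft'⟩ := ihy
    exact ⟨b + b', add_mem hb hb', IsFT_add hft hft'⟩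
  | mul x y hx hy ihx ihy =>
    obtain ⟨b, hb, hft⟩ := ihx
    obtain ⟨b', hb', hft'⟩ := ihy
    exact ⟨b * b', mul_mem hb hb', IsFT_mul hft hft'⟩

/-- the Fourier transform as a function on the Weyl algebra -/
noncomputable def ft (a : WeylAlgebra n) : WeylAlgebra n :=
  ⟨(exists_FT (a : Module.End ℂ P) a.2).choose, (exists_FT _ a.2).choose_spec.1⟩

lemma ft_isFT (a : WeylAlgebra n) : IsFT (a : Module.End ℂ P) (ft a : Module.End ℂ P) :=
  (exists_FT _ a.2).choose_spec.2

lemma ft_eq {a b : WeylAlgebra n} (h : IsFT (a : Module.End ℂ P) (b : Module.End ℂ P)) :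
    ft a = b :=
  Subtype.ext (IsFT_unique (ft_isFT a) h)

/-- the Fourier transform as an algebra homomorphism -/
noncomputable def ftHom : WeylAlgebra n →ₐ[ℂ] WeylAlgebra n where
  toFun := ft
  map_one' := ft_eq (by rw [OneMemClass.coe_one]; exact IsFT_one)
  map_mul' a b := ft_eq (by
    rw [MulMemClass.coe_mul, MulMemClass.coe_mul]
    exact IsFT_mul (ft_isFT a) (ft_isFT b))
  map_zero' := ft_eq (by
    rw [ZeroMemClass.coe_zero]
    have h0 : (0 : Module.End ℂ P) = algebraMap ℂ _ 0 := by simp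
    rw [h0]
    exact IsFT_algebraMap 0)
  map_add' a b := ft_eq (by
    rw [AddMemClass.coe_add, AddMemClass.coe_add]
    exact IsFT_add (ft_isFT a) (ft_isFT b))
  commutes' r := ft_eq (IsFT_algebraMap r)

lemma ftHom_X (i : Fin n) : ftHom (⟨Mop i, Mop_mem i⟩ : WeylAlgebra n) = ⟨Dop i, Dop_mem i⟩ :=
  ft_eq (IsFT_X i)

lemma coe_neg_W (a : WeylAlgebra n) : ((-a : WeylAlgebra n) : Module.End ℂ P) = -(a : Module.End ℂ P) :=
  rfl

lemma ftHom_D (i : Fin n) :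
    ftHom (⟨Dop i, Dop_mem i⟩ : WeylAlgebra n) = -(⟨Mop i, Mop_mem i⟩ : WeylAlgebra n) :=
  ft_eq (by rw [coe_neg_W]; exact IsFT_D i)

lemma ftHom_negX (i : Fin n) :
    ftHom (-(⟨Mop i, Mop_mem i⟩ : WeylAlgebra n)) = -(⟨Dop i, Dop_mem i⟩ : WeylAlgebra n) :=
  ft_eq (by rw [coe_neg_W, coe_neg_W]; exact IsFT_neg (IsFT_X i))

lemma ftHom_negD (i : Fin n) :
    ftHom (-(⟨Dop i, Dop_mem i⟩ : WeylAlgebra n)) = (⟨Mop i, Mop_mem i⟩ : WeylAlgebra n) :=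
  ft_eq (by rw [coe_neg_W]; exact IsFT_negD i)

lemma ftHom_four (a : WeylAlgebra n) : ftHom (ftHom (ftHom (ftHom a))) = a := by
  obtain ⟨x, hx⟩ := a
  induction hx using Algebra.adjoin_induction with
  | mem x hx =>
    rcases hx with ⟨i, rfl⟩ | ⟨i, rfl⟩
    · show ftHom (ftHom (ftHom (ftHom (⟨Mop i, Mop_mem i⟩ : WeylAlgebra n))))
          = (⟨Mop i, Mop_mem i⟩ : WeylAlgebra n)
      rw [ftHom_X, ftHom_D, ftHom_negX, ftHom_negD]
    · show ftHom (ftHom (ftHom (ftHom (⟨Dop i, Dop_mem i⟩ : WeylAlgebra n))))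
          = (⟨Dop i, Dop_mem i⟩ : WeylAlgebra n)
      rw [ftHom_D, ftHom_negX, ftHom_negD, ftHom_X]
  | algebraMap r =>
    have h1 : (⟨algebraMap ℂ (Module.End ℂ P) r, Subalgebra.algebraMap_mem _ r⟩ : WeylAlgebra n)
        = algebraMap ℂ (WeylAlgebra n) r := rfl
    rw [h1, AlgHom.commutes, AlgHom.commutes, AlgHom.commutes, AlgHom.commutes]
  | add x y hx hy ihx ihy =>
    have h1 : (⟨x + y, add_mem hx hy⟩ : WeylAlgebra n) = ⟨x, hx⟩ + ⟨y, hy⟩ := rfl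
    rw [h1, map_add, map_add, map_add, map_add, ihx, ihy]
  | mul x y hx hy ihx ihy =>
    have h1 : (⟨x * y, mul_mem hx hy⟩ : WeylAlgebra n) = ⟨x, hx⟩ * ⟨y, hy⟩ := rfl
    rw [h1, map_mul, map_mul, map_mul, map_mul, ihx, ihy]

/-- the Fourier transform as an algebra equivalence -/
noncomputable def ftEquiv : WeylAlgebra n ≃ₐ[ℂ] WeylAlgebra n :=
  AlgEquiv.ofBijective ftHom
    ⟨fun a b hab => by
      have h3 := congrArg (fun x => ftHom (ftHom (ftHom x))) hab
      rw [ftHom_four, ftHom_four] at h3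
      exact h3,
     fun b => ⟨ftHom (ftHom (ftHom b)), ftHom_four b⟩⟩

lemma ftEquiv_apply (a : WeylAlgebra n) : ftEquiv a = ftHom a := rfl

end WeylFourier

/-- Example 5.1.4: the Fourier transform. There is a `ℂ`-algebra automorphism `σ`
of the Weyl algebra `Aₙ(ℂ)` with `σ(xᵢ) = ∂ᵢ` and `σ(∂ᵢ) = -xᵢ` for all `i`. -/
theorem stmt_3 (n : ℕ) (hn : 0 < n) :
    ∃ σ : WeylAlgebra n ≃ₐ[ℂ] WeylAlgebra n,
      ∀ i : Fin n, σ (weylX n i) = weylP n i ∧ σ (weylP n i) = -(weylX n i) := by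
  refine ⟨WeylFourier.ftEquiv, fun i => ⟨?_, ?_⟩⟩
  · show WeylFourier.ftHom (weylX n i) = weylP n i
    have h1 : weylX n i = ⟨WeylFourier.Mop i, WeylFourier.Mop_mem i⟩ := Subtype.ext rfl
    have h2 : weylP n i = ⟨WeylFourier.Dop i, WeylFourier.Dop_mem i⟩ := Subtype.ext rfl
    rw [h1, h2, WeylFourier.ftHom_X]
  · show WeylFourier.ftHom (weylP n i) = -(weylX n i)
    have h1 : weylX n i = ⟨WeylFourier.Mop i, WeylFourier.Mop_mem i⟩ := Subtype.ext rfl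
    have h2 : weylP n i = ⟨WeylFourier.Dop i, WeylFourier.Dop_mem i⟩ := Subtype.ext rfl
    rw [h1, h2, WeylFourier.ftHom_D]
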